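/- Assume (C0): a≥0, 0<μ<1/2, c>0, T>0 and e:[0,T]→ℝ continuous. Let G_m:[0,T]×[0,T]→ℝ be continuous such that: for each continuous h:[0,T]→ℝ, t ↦ ∫₀ᵀ G_m(t,s)h(s) ds is the unique solution of x''+a x'+m² x=h, x(0)=x(T), x'(0)=x'(T); G_m>0 on [0,T]²; ∫₀ᵀ G_m(t,s) ds = 1/m² for all t; and G_m(t,s) ≥ G_m(s,s) ≥ c_m G_m(t,s) for all (t,s), where c_m∈(0,1). Suppose there are m>0, κ>0 and 0<R₁<R₂ such that m²<(π/T)²+(a/2)² and: (C1) e_* ≤ 0 and (c_m R₁)^μ ≥ (c+sqrt(c²−4μm²e_*))/(2μm²); (C2) (c_m R₁)^{1−2μ} ≥ κμ; (C3) ∫₀ᵀ G_m(s,s) e₊(s) ds ≥ c_m R₁/κ; (C4) e^* ≤ c R₂^μ; where e_* = min e, e^* = max e and e₊(t)=max{e(t),0}. Then there exists a twice continuously differentiable x:[0,T]→ℝ with x(t)>0 for all t∈[0,T], x''(t)+a x'(t) = (e(t)/μ)x(t)^{1−2μ} − (c/μ)x(t)^{1−μ} for all t∈[0,T], x(0)=x(T)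 and x'(0)=x'(T). -/

import Mathlib

open Set Real
open MeasureTheory Filter

noncomputable def pd1 (T : ℝ) (x : ℝ → ℝ) : ℝ → ℝ := derivWithin x (Set.Icc 0 T)

noncomputable def pd2 (T : ℝ) (x : ℝ → ℝ) : ℝ → ℝ := derivWithin (pd1 T x) (Set.Icc 0 T)

/-- `x` is a (twice continuously differentiable) solution of the linear periodic problem
`x'' + a x' + m² x = h` on `[0,T]`, `x(0)=x(T)`, `x'(0)=x'(T)`. -/
def IsLinSol (T a m : ℝ) (h x : ℝ → ℝ) : Prop :=
  ContDiffOn ℝ 2 x (Set.Icc 0 T) ∧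
  (∀ t ∈ Set.Icc 0 T, pd2 T x t + a * pd1 T x t + m ^ 2 * x t = h t) ∧
  x 0 = x T ∧ pd1 T x 0 = pd1 T x T

/-- Property (G1): for each continuous `h`, `t ↦ ∫₀ᵀ G(t,s) h(s) ds` is the unique solution
of the linear periodic problem. -/
def PropG1 (T a m : ℝ) (G : ℝ → ℝ → ℝ) : Prop :=
  ∀ h : ℝ → ℝ, ContinuousOn h (Set.Icc 0 T) →
    IsLinSol T a m h (fun t => ∫ s in (0:ℝ)..T, G t s * h s) ∧
    ∀ x : ℝ → ℝ, IsLinSol T a m h x →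
      ∀ t ∈ Set.Icc 0 T, x t = ∫ s in (0:ℝ)..T, G t s * h s


lemma quad_ge {μ c m estar z : ℝ} (hμ0 : 0 < μ) (hm : 0 < m) (hc : 0 < c) (hestar : estar ≤ 0)
    (hz : (c + Real.sqrt (c ^ 2 - 4 * μ * m ^ 2 * estar)) / (2 * μ * m ^ 2) ≤ z) :
    c * z - estar ≤ μ * m ^ 2 * z ^ 2 := by
  set s := Real.sqrt (c ^ 2 - 4 * μ * m ^ 2 * estar) with hs
  have hm2 : 0 < 2 * μ * m ^ 2 := by positivity
  have hs0 : 0 ≤ s := Real.sqrt_nonneg _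
  have hs2 : s ^ 2 = c ^ 2 - 4 * μ * m ^ 2 * estar := Real.sq_sqrt (by nlinarith)
  have hz' : c + s ≤ 2 * μ * m ^ 2 * z := by
    have := (div_le_iff₀ hm2).mp hz; linarith
  have h1 : 0 ≤ 2 * μ * m ^ 2 * z - c - s := by linarith
  have h2 : 0 ≤ 2 * μ * m ^ 2 * z - c + s := by linarith
  nlinarith [mul_nonneg h1 h2]

lemma psi_nonneg {μ c m estar y : ℝ} (hμ0 : 0 < μ) (hμ : μ < 1/2) (hm : 0 < m) (hc : 0 < c)
    (hestar : estar ≤ 0) (hy : 0 ≤ y)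
    (hyY : y * ((c + Real.sqrt (c ^ 2 - 4 * μ * m ^ 2 * estar)) / (2 * μ * m ^ 2)) ≤ 1) :
    0 ≤ m ^ 2 + (1 - 2 * μ) * estar / μ * y ^ 2 - (1 - μ) * c / μ * y := by
  set s := Real.sqrt (c ^ 2 - 4 * μ * m ^ 2 * estar) with hs
  set z₀ := (c + s) / (2 * μ * m ^ 2) with hz₀
  have hm2 : (0:ℝ) < 2 * μ * m ^ 2 := by positivity
  have hs0 : 0 ≤ s := Real.sqrt_nonneg _
  have hs2 : s ^ 2 = c ^ 2 - 4 * μ * m ^ 2 * estar := Real.sq_sqrt (by nlinarith)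
  have hz₀pos : 0 < z₀ := by rw [hz₀]; positivity
  have hid : μ * m ^ 2 * z₀ ^ 2 = c * z₀ - estar := by
    rw [hz₀]; field_simp; nlinarith [hs2]
  have h1z : 0 ≤ 1 - y * z₀ := by linarith
  have hA : 0 ≤ μ * m ^ 2 * (1 - y * z₀) := by positivity
  have hB : 0 ≤ (-estar) * y * (1 - y * z₀) := by
    apply mul_nonneg (mul_nonneg (by linarith) hy) h1z
  have hB' : z₀ * (μ * m ^ 2 * y * z₀ + estar * y ^ 2 - c * y) = (-estar) * y * (1 - y * z₀) := by
    linear_combination y * hid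
  have hS0 : 0 ≤ μ * m ^ 2 * y * z₀ + estar * y ^ 2 - c * y := by nlinarith [hB, hB', hz₀pos]
  have hC : 0 ≤ μ * c * y := by positivity
  have hD : 0 ≤ (-2) * μ * estar * y ^ 2 := by
    have : 0 ≤ (-estar) * y ^ 2 := mul_nonneg (by linarith) (sq_nonneg y)
    nlinarith [this]
  have key : 0 ≤ μ * m ^ 2 + (1 - 2 * μ) * estar * y ^ 2 - (1 - μ) * c * y := by linarith
  have hexp : μ * (m ^ 2 + (1 - 2 * μ) * estar / μ * y ^ 2 - (1 - μ) * c / μ * y)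
      = μ * m ^ 2 + (1 - 2 * μ) * estar * y ^ 2 - (1 - μ) * c * y := by
    field_simp
  nlinarith [key, hexp, hμ0]

set_option maxHeartbeats 1000000 in
theorem statement9 (T a μ c m κ cm R₁ R₂ estar estar' : ℝ) (e : ℝ → ℝ)
    (ha : 0 ≤ a) (hμ0 : 0 < μ) (hμ : μ < 1/2) (hc : 0 < c) (hT : 0 < T)
    (he : ContinuousOn e (Set.Icc 0 T))
    (hm : 0 < m) (hκ : 0 < κ) (hR₁ : 0 < R₁) (hR₁₂ : R₁ < R₂)
    (hm' : m ^ 2 < (Real.pi / T) ^ 2 + (a / 2) ^ 2)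
    (hcm : cm ∈ Set.Ioo (0:ℝ) 1)
    (G : ℝ → ℝ → ℝ)
    (hGc : ContinuousOn (fun p : ℝ × ℝ => G p.1 p.2) (Set.Icc 0 T ×ˢ Set.Icc 0 T))
    (hG1 : PropG1 T a m G)
    (hGpos : ∀ t ∈ Set.Icc 0 T, ∀ u ∈ Set.Icc 0 T, 0 < G t u)
    (hG3 : ∀ t ∈ Set.Icc 0 T, (∫ u in (0:ℝ)..T, G t u) = 1 / m ^ 2)
    (hG4 : ∀ t ∈ Set.Icc 0 T, ∀ u ∈ Set.Icc 0 T, G u u ≤ G t u ∧ cm * G t u ≤ G u u)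
    (hestar : IsLeast (e '' Set.Icc 0 T) estar)
    (hestar' : IsGreatest (e '' Set.Icc 0 T) estar')
    (hC1 : estar ≤ 0 ∧
      (c + Real.sqrt (c ^ 2 - 4 * μ * m ^ 2 * estar)) / (2 * μ * m ^ 2) ≤ (cm * R₁) ^ μ)
    (hC2 : κ * μ ≤ (cm * R₁) ^ (1 - 2 * μ))
    (hC3 : cm * R₁ / κ ≤ ∫ u in (0:ℝ)..T, G u u * max (e u) 0)
    (hC4 : estar' ≤ c * R₂ ^ μ) :
    ∃ x : ℝ → ℝ, ContDiffOn ℝ 2 x (Set.Icc 0 T) ∧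
      (∀ t ∈ Set.Icc 0 T, 0 < x t) ∧
      (∀ t ∈ Set.Icc 0 T,
        pd2 T x t + a * pd1 T x t =
          (e t / μ) * x t ^ (1 - 2 * μ) - (c / μ) * x t ^ (1 - μ)) ∧
      x 0 = x T ∧ pd1 T x 0 = pd1 T x T := by
  classical
  obtain ⟨hestar_mem, hestar_lb⟩ := hestar
  obtain ⟨hestar'_mem, hestar'_ub⟩ := hestar'
  obtain ⟨hC1a, hC1b⟩ := hC1
  obtain ⟨hcm0, hcm1⟩ := hcm
  have hIoc : MeasurableSet (Set.Ioc (0:ℝ) T) := measurableSet_Ioc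
  have h2μ : (0:ℝ) < 1 - 2 * μ := by linarith
  have h1μ : (0:ℝ) < 1 - μ := by linarith
  set r : ℝ := cm * R₁ with hrdef
  have hr0 : 0 < r := mul_pos hcm0 hR₁
  have hrR₂ : r < R₂ := lt_trans (by nlinarith) hR₁₂
  have hR₂0 : 0 < R₂ := lt_trans hr0 hrR₂
  have heb : ∀ u ∈ Set.Icc (0:ℝ) T, estar ≤ e u ∧ e u ≤ estar' := fun u hu =>
    ⟨hestar_lb ⟨u, hu, rfl⟩, hestar'_ub ⟨u, hu, rfl⟩⟩
  set g : ℝ → ℝ → ℝ := fun u x => e u / μ * x ^ (1 - 2 * μ) - c / μ * x ^ (1 - μ) + m ^ 2 * x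
    with hgdef
  -- continuity of g composed with a continuous positive function
  have hgcont : ∀ w : ℝ → ℝ, ContinuousOn w (Set.Icc 0 T) →
      (∀ u ∈ Set.Icc (0:ℝ) T, w u ∈ Set.Icc r R₂) →
      ContinuousOn (fun u => g u (w u)) (Set.Icc 0 T) := by
    intro w hw hwmem
    have hne : ∀ u ∈ Set.Icc (0:ℝ) T, w u ≠ 0 := fun u hu =>
      ne_of_gt (lt_of_lt_of_le hr0 (hwmem u hu).1)
    exact (((he.div_const μ).mul (hw.rpow_const (fun u hu => Or.inl (hne u hu)))).sub
      (continuousOn_const.mul (hw.rpow_const (fun u hu => Or.inl (hne u hu))))).add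
      (continuousOn_const.mul hw)
  -- monotonicity of g in x on [r, R₂]
  have hgmono : ∀ u ∈ Set.Icc (0:ℝ) T, MonotoneOn (g u) (Set.Icc r R₂) := by
    intro u hu
    have hne : ∀ x ∈ Set.Icc r R₂, (x:ℝ) ≠ 0 := fun x hx =>
      ne_of_gt (lt_of_lt_of_le hr0 hx.1)
    have hcont : ContinuousOn (g u) (Set.Icc r R₂) := by
      exact ((continuousOn_const.mul
          (continuousOn_id.rpow_const (fun x hx => Or.inl (hne x hx)))).sub
        (continuousOn_const.mul
          (continuousOn_id.rpow_const (fun x hx => Or.inl (hne x hx))))).add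
        (continuousOn_const.mul continuousOn_id)
    have hderiv : ∀ x ∈ Set.Ioo r R₂, HasDerivAt (g u)
        (e u / μ * ((1 - 2*μ) * x ^ (1 - 2*μ - 1)) - c / μ * ((1 - μ) * x ^ (1 - μ - 1))
          + m^2 * 1) x := by
      intro x hx
      have hx0 : x ≠ 0 := ne_of_gt (lt_trans hr0 hx.1)
      exact (((Real.hasDerivAt_rpow_const (Or.inl hx0)).const_mul (e u / μ)).sub
        ((Real.hasDerivAt_rpow_const (Or.inl hx0)).const_mul (c / μ))).add
        ((hasDerivAt_id x).const_mul (m^2))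
    apply monotoneOn_of_deriv_nonneg (convex_Icc r R₂) hcont
    · intro x hx
      rw [interior_Icc] at hx
      exact (hderiv x hx).differentiableAt.differentiableWithinAt
    · intro x hx
      rw [interior_Icc] at hx
      rw [(hderiv x hx).deriv]
      have hx0 : 0 < x := lt_trans hr0 hx.1
      have e1 : x ^ (1 - 2*μ - 1) = x ^ (-μ) * x ^ (-μ) := by
        rw [show (1 - 2*μ - 1 : ℝ) = (-μ) + (-μ) by ring, Real.rpow_add hx0]
      have e2 : x ^ (1 - μ - 1) = x ^ (-μ) := by
        rw [show (1 - μ - 1 : ℝ) = -μ by ring]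
      rw [e1, e2]
      set y : ℝ := x ^ (-μ) with hy
      have hy0 : 0 ≤ y := Real.rpow_nonneg hx0.le _
      have hyr : y ≤ r ^ (-μ) := Real.rpow_le_rpow_of_nonpos hr0 hx.1.le (by linarith)
      have hz₀0 : 0 ≤ (c + Real.sqrt (c ^ 2 - 4 * μ * m ^ 2 * estar)) / (2 * μ * m ^ 2) := by
        positivity
      have hyY : y * ((c + Real.sqrt (c ^ 2 - 4 * μ * m ^ 2 * estar)) / (2 * μ * m ^ 2)) ≤ 1 := by
        calc y * ((c + Real.sqrt (c ^ 2 - 4 * μ * m ^ 2 * estar)) / (2 * μ * m ^ 2))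
            ≤ r ^ (-μ) * r ^ μ :=
              mul_le_mul hyr hC1b hz₀0 (Real.rpow_nonneg hr0.le _)
          _ = 1 := by rw [← Real.rpow_add hr0]; simp
      have hψ := psi_nonneg hμ0 hμ hm hc hC1a hy0 hyY
      have hee := (heb u hu).1
      have hμinv : (0:ℝ) ≤ μ⁻¹ := inv_nonneg.2 hμ0.le
      have hhint : 0 ≤ (e u - estar) * μ⁻¹ * (1 - 2*μ) * (y * y) :=
        mul_nonneg (mul_nonneg (mul_nonneg (sub_nonneg.2 hee) hμinv) h2μ.le)
          (mul_nonneg hy0 hy0)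
      have h3 : e u / μ * ((1 - 2*μ) * (y*y)) - c/μ*((1-μ)*y) + m^2*1
          = (m^2 + (1-2*μ)*estar/μ*y^2 - (1-μ)*c/μ*y) + (e u - estar)*μ⁻¹*(1-2*μ)*(y*y) := by
        field_simp
        ring
      rw [h3]
      linarith [hψ, hhint]
  -- bound on g
  set E : ℝ := max |estar| |estar'| with hEdef
  set B : ℝ := m ^ 2 * R₂ + E / μ * R₂ ^ (1 - 2 * μ) + c / μ * R₂ ^ (1 - μ) with hBdef
  have hB0 : 0 < B := by positivity
  have hgB : ∀ u ∈ Set.Icc (0:ℝ) T, ∀ x ∈ Set.Icc r R₂, |g u x| ≤ B := by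
    intro u hu x hx
    have hx0 : 0 < x := lt_of_lt_of_le hr0 hx.1
    have h1 : |e u| ≤ E := by
      rw [abs_le]
      constructor
      · have h2 := neg_abs_le estar
        have h3 := le_max_left |estar| |estar'|
        have h4 := (heb u hu).1
        rw [hEdef]; linarith
      · have h2 := le_abs_self estar'
        have h3 := le_max_right |estar| |estar'|
        have h4 := (heb u hu).2
        rw [hEdef]; linarith
    have hE0 : 0 ≤ E := le_trans (abs_nonneg _) h1
    have hp1 : x ^ (1 - 2*μ) ≤ R₂ ^ (1 - 2*μ) := Real.rpow_le_rpow hx0.le hx.2 h2μ.le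
    have hp2 : x ^ (1 - μ) ≤ R₂ ^ (1 - μ) := Real.rpow_le_rpow hx0.le hx.2 h1μ.le
    have hp1' : (0:ℝ) ≤ x ^ (1 - 2*μ) := Real.rpow_nonneg hx0.le _
    have hp2' : (0:ℝ) ≤ x ^ (1 - μ) := Real.rpow_nonneg hx0.le _
    have htri : |g u x| ≤ |e u / μ * x ^ (1 - 2*μ)| + |c / μ * x ^ (1 - μ)| + |m^2 * x| := by
      show |e u / μ * x ^ (1 - 2*μ) - c / μ * x ^ (1 - μ) + m^2 * x| ≤ _
      exact le_trans (abs_add_le _ _) (add_le_add_left (abs_sub _ _) _)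
    have hb1 : |e u / μ * x ^ (1 - 2*μ)| ≤ E / μ * R₂ ^ (1 - 2*μ) := by
      rw [abs_mul, abs_div, abs_of_pos hμ0, abs_of_nonneg hp1']
      exact mul_le_mul ((div_le_div_iff_of_pos_right hμ0).2 h1) hp1 hp1' (by positivity)
    have hb2 : |c / μ * x ^ (1 - μ)| ≤ c / μ * R₂ ^ (1 - μ) := by
      rw [abs_mul, abs_div, abs_of_pos hμ0, abs_of_pos hc, abs_of_nonneg hp2']
      exact mul_le_mul_of_nonneg_left hp2 (by positivity)
    have hb3 : |m^2 * x| ≤ m^2 * R₂ := by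
      rw [abs_mul, abs_of_nonneg (sq_nonneg m), abs_of_pos hx0]
      exact mul_le_mul_of_nonneg_left hx.2 (sq_nonneg m)
    rw [hBdef]; linarith
  -- bound on G
  obtain ⟨M, hMb⟩ := (isCompact_Icc.prod isCompact_Icc).exists_bound_of_continuousOn hGc
  have hM : ∀ t ∈ Set.Icc (0:ℝ) T, ∀ u ∈ Set.Icc (0:ℝ) T, |G t u| ≤ M := fun t ht u hu =>
    hMb (t, u) ⟨ht, hu⟩
  have h0T : (0:ℝ) ∈ Set.Icc (0:ℝ) T := ⟨le_refl _, hT.le⟩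
  have hM0 : 0 ≤ M := le_trans (abs_nonneg _) (hM 0 h0T 0 h0T)
  -- continuity of slices of G
  have hGt : ∀ t ∈ Set.Icc (0:ℝ) T, ContinuousOn (fun u => G t u) (Set.Icc 0 T) := by
    intro t ht
    exact hGc.comp (Continuous.continuousOn (continuous_const.prodMk continuous_id)) (fun u hu => ⟨ht, hu⟩)
  have hGu : ∀ u ∈ Set.Icc (0:ℝ) T, ContinuousOn (fun t => G t u) (Set.Icc 0 T) := by
    intro u hu
    exact hGc.comp (Continuous.continuousOn (continuous_id.prodMk continuous_const)) (fun t ht => ⟨ht, hu⟩)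
  have hGdiag : ContinuousOn (fun u => G u u) (Set.Icc 0 T) :=
    hGc.comp (Continuous.continuousOn (continuous_id.prodMk continuous_id)) (fun u hu => ⟨hu, hu⟩)
  -- interval integrability of continuous functions
  have hInt : ∀ w : ℝ → ℝ, ContinuousOn w (Set.Icc 0 T) → IntervalIntegrable w volume 0 T := by
    intro w hw
    exact (by rwa [Set.uIcc_of_le hT.le] : ContinuousOn w (Set.uIcc 0 T)).intervalIntegrable
  -- continuity of the integral operator
  have hKc : ∀ w : ℝ → ℝ, AEStronglyMeasurable w (volume.restrict (Set.Ioc 0 T)) →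
      (∀ u ∈ Set.Ioc (0:ℝ) T, |w u| ≤ B) →
      ContinuousOn (fun t => ∫ u in (0:ℝ)..T, G t u * w u) (Set.Icc 0 T) := by
    intro w hwm hwb t₀ ht₀
    have heq : ∀ t, (∫ u in (0:ℝ)..T, G t u * w u) = ∫ u in Set.Ioc (0:ℝ) T, G t u * w u := by
      intro t; exact intervalIntegral.integral_of_le hT.le
    simp only [heq]
    apply MeasureTheory.continuousWithinAt_of_dominated (bound := fun _ => M * B)
    · filter_upwards [self_mem_nhdsWithin] with t ht
      exact (((hGt t ht).mono Set.Ioc_subset_Icc_self).aestronglyMeasurable hIoc).mul hwm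
    · filter_upwards [self_mem_nhdsWithin] with t ht
      rw [MeasureTheory.ae_restrict_iff' hIoc]
      refine Filter.Eventually.of_forall (fun u hu => ?_)
      rw [Real.norm_eq_abs, abs_mul]
      exact mul_le_mul (hM t ht u (Set.Ioc_subset_Icc_self hu)) (hwb u hu) (abs_nonneg _) hM0
    · exact MeasureTheory.integrableOn_const measure_Ioc_lt_top.ne
    · rw [MeasureTheory.ae_restrict_iff' hIoc]
      refine Filter.Eventually.of_forall (fun u hu => ?_)
      exact ((hGu u (Set.Ioc_subset_Icc_self hu)) t₀ ht₀).mul continuousWithinAt_const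
  -- upper solution
  have hupper : ∀ w : ℝ → ℝ, ContinuousOn w (Set.Icc 0 T) →
      (∀ u ∈ Set.Icc (0:ℝ) T, w u ∈ Set.Icc r R₂) →
      ∀ t ∈ Set.Icc (0:ℝ) T, (∫ u in (0:ℝ)..T, G t u * g u (w u)) ≤ R₂ := by
    intro w hw hwm t ht
    have hgR₂ : ∀ u ∈ Set.Icc (0:ℝ) T, g u (w u) ≤ m ^ 2 * R₂ := by
      intro u hu
      have h1 : g u (w u) ≤ g u R₂ := hgmono u hu (hwm u hu) ⟨hrR₂.le, le_refl _⟩ (hwm u hu).2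
      have hRμ : R₂ ^ μ * R₂ ^ (1 - 2*μ) = R₂ ^ (1 - μ) := by
        rw [← Real.rpow_add hR₂0]; congr 1; ring
      have h3 : e u ≤ c * R₂ ^ μ := le_trans (heb u hu).2 hC4
      have h5 := mul_le_mul_of_nonneg_right h3 (Real.rpow_nonneg hR₂0.le (1 - 2*μ))
      have h6 := mul_le_mul_of_nonneg_left h5 (inv_nonneg.2 hμ0.le)
      have h4 : e u / μ * R₂ ^ (1 - 2*μ) ≤ c / μ * R₂ ^ (1 - μ) := by
        rw [← hRμ]
        have hid : e u / μ * R₂ ^ (1 - 2*μ) = μ⁻¹ * (e u * R₂ ^ (1 - 2*μ)) := by ring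
        have hid2 : c / μ * (R₂ ^ μ * R₂ ^ (1 - 2*μ)) = μ⁻¹ * (c * R₂ ^ μ * R₂ ^ (1 - 2*μ)) := by
          ring
        rw [hid, hid2]
        exact h6
      have h2 : g u R₂ ≤ m ^ 2 * R₂ := by
        show e u / μ * R₂ ^ (1 - 2*μ) - c / μ * R₂ ^ (1 - μ) + m ^ 2 * R₂ ≤ m ^ 2 * R₂
        linarith
      linarith
    calc (∫ u in (0:ℝ)..T, G t u * g u (w u)) ≤ ∫ u in (0:ℝ)..T, G t u * (m ^ 2 * R₂) :=
        intervalIntegral.integral_mono_on hT.le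
          (hInt _ ((hGt t ht).mul (hgcont _ hw hwm)))
          (hInt _ ((hGt t ht).mul continuousOn_const))
          (fun u hu => mul_le_mul_of_nonneg_left (hgR₂ u hu) (hGpos t ht u hu).le)
      _ = (∫ u in (0:ℝ)..T, G t u) * (m ^ 2 * R₂) := intervalIntegral.integral_mul_const _ _
      _ = (1 / m ^ 2) * (m ^ 2 * R₂) := by rw [hG3 t ht]
      _ = R₂ := by field_simp
  -- lower solution
  have hlower : ∀ w : ℝ → ℝ, ContinuousOn w (Set.Icc 0 T) →
      (∀ u ∈ Set.Icc (0:ℝ) T, w u ∈ Set.Icc r R₂) →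
      ∀ t ∈ Set.Icc (0:ℝ) T, r ≤ ∫ u in (0:ℝ)..T, G t u * g u (w u) := by
    intro w hw hwm t ht
    set z : ℝ := r ^ μ with hzdef
    have hz0 : 0 < z := Real.rpow_pos_of_pos hr0 μ
    set κ' : ℝ := r ^ (1 - 2*μ) / μ with hκ'def
    have hκ'0 : 0 < κ' := by
      rw [hκ'def]; positivity
    set K : ℝ := m ^ 2 * r + κ' * (estar - c * z) with hKdef
    have hrμ : r ^ μ * r ^ (1 - 2*μ) = r ^ (1 - μ) := by
      rw [← Real.rpow_add hr0]; congr 1; ring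
    have hptwise : ∀ u ∈ Set.Icc (0:ℝ) T, K + κ' * max (e u) 0 ≤ g u (w u) := by
      intro u hu
      have h1 : g u r ≤ g u (w u) := hgmono u hu ⟨le_refl r, hrR₂.le⟩ (hwm u hu) (hwm u hu).1
      have hel : max (e u) 0 + estar ≤ e u := by
        rcases le_or_gt (e u) 0 with h | h
        · rw [max_eq_right h]; linarith [(heb u hu).1]
        · rw [max_eq_left h.le]; linarith
      have h2 : K + κ' * max (e u) 0 ≤ g u r := by
        show K + κ' * max (e u) 0 ≤ e u / μ * r ^ (1 - 2*μ) - c / μ * r ^ (1 - μ) + m ^ 2 * r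
        have hexp1 : e u / μ * r ^ (1 - 2*μ) = κ' * e u := by rw [hκ'def]; ring
        have hexp2 : c / μ * r ^ (1 - μ) = κ' * (c * z) := by
          rw [hκ'def, hzdef, ← hrμ]; ring
        rw [hexp1, hexp2, hKdef]
        have h7 := mul_le_mul_of_nonneg_left hel hκ'0.le
        linarith
      linarith
    have hmax_cont : ContinuousOn (fun u => max (e u) 0) (Set.Icc 0 T) :=
      continuous_max.comp_continuousOn (f := fun u => (e u, (0:ℝ))) (he.prodMk continuousOn_const)
    have hint1 : (∫ u in (0:ℝ)..T, G t u * (K + κ' * max (e u) 0))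
        = K * (1 / m ^ 2) + κ' * ∫ u in (0:ℝ)..T, G t u * max (e u) 0 := by
      have e1 : ∀ u, G t u * (K + κ' * max (e u) 0)
          = G t u * K + κ' * (G t u * max (e u) 0) := fun u => by ring
      simp_rw [e1]
      rw [intervalIntegral.integral_add (hInt (fun u => G t u * K) ((hGt t ht).mul continuousOn_const))
        (hInt (fun u => κ' * (G t u * max (e u) 0)) (continuousOn_const.mul ((hGt t ht).mul hmax_cont))),
        intervalIntegral.integral_mul_const, intervalIntegral.integral_const_mul, hG3 t ht]
      ring
    have hdiag : r / κ ≤ ∫ u in (0:ℝ)..T, G t u * max (e u) 0 := by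
      refine le_trans hC3 (intervalIntegral.integral_mono_on hT.le
        (hInt _ (hGdiag.mul hmax_cont)) (hInt _ ((hGt t ht).mul hmax_cont)) ?_)
      intro u hu
      exact mul_le_mul_of_nonneg_right (hG4 t ht u hu).1 (le_max_right _ _)
    have hstep1 : K * (1 / m ^ 2) + κ' * (r / κ) ≤ ∫ u in (0:ℝ)..T, G t u * g u (w u) := by
      have h8 := intervalIntegral.integral_mono_on hT.le
        (hInt (fun u => G t u * (K + κ' * max (e u) 0)) ((hGt t ht).mul (continuousOn_const.add (continuousOn_const.mul hmax_cont))))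
        (hInt (fun u => G t u * g u (w u)) ((hGt t ht).mul (hgcont _ hw hwm)))
        (fun u hu => mul_le_mul_of_nonneg_left (hptwise u hu) (hGpos t ht u hu).le)
      rw [hint1] at h8
      have h9 := mul_le_mul_of_nonneg_left hdiag hκ'0.le
      linarith
    have hq : c * z - estar ≤ μ * m ^ 2 * z ^ 2 :=
      quad_ge hμ0 hm hc hC1a (by rw [hzdef]; exact hC1b)
    have hrz : r ^ (1 - 2*μ) * z ^ 2 = r := by
      rw [hzdef, sq, ← Real.rpow_add hr0, ← Real.rpow_add hr0,
        show (1 - 2*μ + (μ + μ) : ℝ) = 1 by ring, Real.rpow_one]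
    have hrκ : μ * z ^ 2 ≤ r / κ := by
      rw [le_div_iff₀ hκ]
      calc μ * z ^ 2 * κ = κ * μ * z ^ 2 := by ring
        _ ≤ r ^ (1 - 2*μ) * z ^ 2 := mul_le_mul_of_nonneg_right hC2 (sq_nonneg z)
        _ = r := hrz
    have hb1 : (c * z - estar) / m ^ 2 ≤ μ * z ^ 2 := by
      rw [div_le_iff₀ (by positivity : (0:ℝ) < m ^ 2)]
      nlinarith [hq]
    have hfin : r ≤ K * (1 / m ^ 2) + κ' * (r / κ) := by
      have hKexp : K * (1 / m ^ 2) = r + κ' * ((estar - c * z) / m ^ 2) := by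
        rw [hKdef]; field_simp
      have hbr : 0 ≤ (estar - c * z) / m ^ 2 + r / κ := by
        have h5 : (c * z - estar) / m ^ 2 ≤ r / κ := le_trans hb1 hrκ
        have h6 : (estar - c * z) / m ^ 2 = -((c * z - estar) / m ^ 2) := by ring
        linarith
      rw [hKexp]
      nlinarith [mul_nonneg hκ'0.le hbr]
    linarith [hstep1]
  -- monotonicity of the operator
  have hopmono : ∀ w₁ w₂ : ℝ → ℝ, ContinuousOn w₁ (Set.Icc 0 T) → ContinuousOn w₂ (Set.Icc 0 T) →
      (∀ u ∈ Set.Icc (0:ℝ) T, w₁ u ∈ Set.Icc r R₂) → (∀ u ∈ Set.Icc (0:ℝ) T, w₂ u ∈ Set.Icc r R₂) →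
      (∀ u ∈ Set.Icc (0:ℝ) T, w₁ u ≤ w₂ u) →
      ∀ t ∈ Set.Icc (0:ℝ) T,
        (∫ u in (0:ℝ)..T, G t u * g u (w₁ u)) ≤ ∫ u in (0:ℝ)..T, G t u * g u (w₂ u) := by
    intro w₁ w₂ hw₁ hw₂ hm₁ hm₂ hle t ht
    apply intervalIntegral.integral_mono_on hT.le
      (hInt _ ((hGt t ht).mul (hgcont _ hw₁ hm₁))) (hInt _ ((hGt t ht).mul (hgcont _ hw₂ hm₂)))
    intro u hu
    exact mul_le_mul_of_nonneg_left
      (hgmono u hu (hm₁ u hu) (hm₂ u hu) (hle u hu)) (hGpos t ht u hu).le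
  -- the iteration sequence
  set seq : ℕ → ℝ → ℝ := fun n => Nat.rec (fun _ => R₂)
    (fun _ w t => ∫ u in (0:ℝ)..T, G t u * g u (w u)) n with hseqdef
  have seqS : ∀ n, seq (n + 1) = fun t => ∫ u in (0:ℝ)..T, G t u * g u (seq n u) := fun n => rfl
  have main : ∀ n : ℕ, ContinuousOn (seq n) (Set.Icc 0 T) ∧
      (∀ t ∈ Set.Icc (0:ℝ) T, seq n t ∈ Set.Icc r R₂) ∧
      (∀ t ∈ Set.Icc (0:ℝ) T, seq (n + 1) t ≤ seq n t) := by
    intro n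
    induction n with
    | zero =>
      refine ⟨continuousOn_const, fun t ht => ⟨hrR₂.le, le_refl R₂⟩, ?_⟩
      intro t ht
      exact hupper _ continuousOn_const (fun u hu => ⟨hrR₂.le, le_refl _⟩) t ht
    | succ n ih =>
      obtain ⟨ihc, ihm, ihs⟩ := ih
      have hc1 : ContinuousOn (seq (n + 1)) (Set.Icc 0 T) := by
        rw [seqS n]
        exact hKc _ (((hgcont _ ihc ihm).mono Set.Ioc_subset_Icc_self).aestronglyMeasurable hIoc)
          (fun u hu => hgB u (Set.Ioc_subset_Icc_self hu) _ (ihm u (Set.Ioc_subset_Icc_self hu)))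
      have hm1 : ∀ t ∈ Set.Icc (0:ℝ) T, seq (n + 1) t ∈ Set.Icc r R₂ := by
        intro t ht
        exact ⟨hlower _ ihc ihm t ht, hupper _ ihc ihm t ht⟩
      refine ⟨hc1, hm1, ?_⟩
      intro t ht
      exact hopmono (seq (n + 1)) (seq n) hc1 ihc hm1 ihm (fun u hu => ihs u hu) t ht
  -- the limit function
  set xl : ℝ → ℝ := fun u => ⨅ n, seq n u with hxldef
  have hbdd : ∀ t ∈ Set.Icc (0:ℝ) T, BddBelow (Set.range fun n => seq n t) := by
    intro t ht
    exact ⟨r, by rintro y ⟨n, rfl⟩; exact ((main n).2.1 t ht).1⟩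
  have hxlmem : ∀ t ∈ Set.Icc (0:ℝ) T, xl t ∈ Set.Icc r R₂ := by
    intro t ht
    constructor
    · exact le_ciInf fun n => ((main n).2.1 t ht).1
    · exact le_trans (ciInf_le (hbdd t ht) 0) ((main 0).2.1 t ht).2
  have hxtend : ∀ t ∈ Set.Icc (0:ℝ) T,
      Filter.Tendsto (fun n => seq n t) Filter.atTop (nhds (xl t)) := by
    intro t ht
    exact tendsto_atTop_ciInf (antitone_nat_of_succ_le fun n => (main n).2.2 t ht) (hbdd t ht)
  -- measurability of the limit
  have hseqAEM : ∀ n, AEMeasurable (seq n) (volume.restrict (Set.Ioc 0 T)) := fun n =>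
    ((main n).1.mono Set.Ioc_subset_Icc_self).aemeasurable hIoc
  have hxlAEM : AEMeasurable xl (volume.restrict (Set.Ioc 0 T)) := AEMeasurable.iInf hseqAEM
  have heAEM : AEMeasurable e (volume.restrict (Set.Ioc 0 T)) :=
    (he.mono Set.Ioc_subset_Icc_self).aemeasurable hIoc
  have hwAESM : AEStronglyMeasurable (fun u => g u (xl u)) (volume.restrict (Set.Ioc 0 T)) := by
    have h1 : AEMeasurable (fun u => g u (xl u)) (volume.restrict (Set.Ioc 0 T)) := by
      exact (((heAEM.div_const μ).mul (hxlAEM.pow_const (1 - 2*μ))).sub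
        ((aemeasurable_const (b := c / μ)).mul (hxlAEM.pow_const (1 - μ)))).add
        ((aemeasurable_const (b := m ^ 2)).mul hxlAEM)
    exact h1.aestronglyMeasurable
  -- fixed point property
  have hfix : ∀ t ∈ Set.Icc (0:ℝ) T, xl t = ∫ u in (0:ℝ)..T, G t u * g u (xl u) := by
    intro t ht
    have h1 : Filter.Tendsto (fun n => seq (n + 1) t) Filter.atTop (nhds (xl t)) :=
      (hxtend t ht).comp (Filter.tendsto_add_atTop_nat 1)
    have h2 : Filter.Tendsto (fun n => seq (n + 1) t) Filter.atTop
        (nhds (∫ u in (0:ℝ)..T, G t u * g u (xl u))) := by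
      have he2 : ∀ n, seq (n + 1) t = ∫ u in Set.Ioc (0:ℝ) T, G t u * g u (seq n u) := by
        intro n
        exact intervalIntegral.integral_of_le hT.le
      rw [intervalIntegral.integral_of_le hT.le]
      simp_rw [he2]
      apply MeasureTheory.tendsto_integral_of_dominated_convergence (bound := fun _ => M * B)
      · intro n
        exact (((hGt t ht).mul (hgcont _ (main n).1 (main n).2.1)).mono
          Set.Ioc_subset_Icc_self).aestronglyMeasurable hIoc
      · exact MeasureTheory.integrableOn_const measure_Ioc_lt_top.ne
      · intro n
        rw [MeasureTheory.ae_restrict_iff' hIoc]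
        refine Filter.Eventually.of_forall (fun u hu => ?_)
        rw [Real.norm_eq_abs, abs_mul]
        exact mul_le_mul (hM t ht u (Set.Ioc_subset_Icc_self hu))
          (hgB u (Set.Ioc_subset_Icc_self hu) _ ((main n).2.1 u (Set.Ioc_subset_Icc_self hu)))
          (abs_nonneg _) hM0
      · rw [MeasureTheory.ae_restrict_iff' hIoc]
        refine Filter.Eventually.of_forall (fun u hu => ?_)
        have hu' : u ∈ Set.Icc (0:ℝ) T := Set.Ioc_subset_Icc_self hu
        have hxlne : xl u ≠ 0 := ne_of_gt (lt_of_lt_of_le hr0 (hxlmem u hu').1)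
        have hgc : ContinuousAt (fun x => g u x) (xl u) := by
          exact ((continuousAt_const.mul
              ((Real.continuousAt_rpow_const _ _ (Or.inl hxlne)))).sub
            (continuousAt_const.mul
              ((Real.continuousAt_rpow_const _ _ (Or.inl hxlne))))).add
            (continuousAt_const.mul continuousAt_id)
        exact (Filter.Tendsto.const_mul (G t u)
          (hgc.tendsto.comp (hxtend u hu')))
    exact tendsto_nhds_unique h1 h2
  -- continuity of the limit
  have hxlcont : ContinuousOn xl (Set.Icc 0 T) := by
    have h1 : ContinuousOn (fun t => ∫ u in (0:ℝ)..T, G t u * g u (xl u)) (Set.Icc 0 T) :=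
      hKc _ hwAESM (fun u hu => hgB u (Set.Ioc_subset_Icc_self hu) _
        (hxlmem u (Set.Ioc_subset_Icc_self hu)))
    exact h1.congr (fun t ht => hfix t ht)
  have hwcont : ContinuousOn (fun u => g u (xl u)) (Set.Icc 0 T) := hgcont _ hxlcont hxlmem
  -- apply PropG1
  obtain ⟨⟨hxCD, hxeq, hxper, hxper'⟩, -⟩ := hG1 (fun u => g u (xl u)) hwcont
  refine ⟨fun t => ∫ s in (0:ℝ)..T, G t s * g s (xl s), hxCD, ?_, ?_, hxper, hxper'⟩
  · intro t ht
    have h2 : (∫ s in (0:ℝ)..T, G t s * g s (xl s)) = xl t := (hfix t ht).symm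
    show 0 < ∫ s in (0:ℝ)..T, G t s * g s (xl s)
    rw [h2]
    exact lt_of_lt_of_le hr0 (hxlmem t ht).1
  · intro t ht
    have h1 := hxeq t ht
    have h2 : (∫ s in (0:ℝ)..T, G t s * g s (xl s)) = xl t := (hfix t ht).symm
    beta_reduce at h1 ⊢
    rw [h2] at h1 ⊢
    rw [hgdef] at h1
    beta_reduce at h1
    linarith
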